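/- Let P ∈ ℝ^{n×n} and let Φ ∈ ℝ^{n×k} have orthonormal columns (ΦᵀΦ = I_k) each of which is an eigenvector of P, so that PΦ = Φ·diag(λ₁,…,λ_k). Let v ∈ ℝⁿ be a nonzero vector with Pv = λv and Φᵀv = 0. Let G(Φ) = (I − Φ(ΦᵀΦ)⁻¹Φᵀ) P Φ ((ΦᵀΦ)⁻¹ΦᵀPΦ)ᵀ, defined on the open set of matrices with ΦᵀΦ invertible. Then for each index i, taking the direction Δ = v eᵢᵀ (where eᵢ is the i-th standard basis vector of ℝ^k), the directional derivative of G at Φ in direction Δ, i.e. (d/dε) G(Φ + εΔ) at ε = 0, equals (λλᵢ − λᵢ²)·Δ. In particular, if 0 < λᵢ < λ then Δ is an eigendirection of the linearization of the flow at Φ with strictly positive eigenvalue, so the stationary point Φ is linearly unstable. -/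

import Mathlib

open Matrix

attribute [local instance] Matrix.normedAddCommGroup Matrix.normedSpace

/-- **Instability of non-top-k eigenvector stationary points.**
Let `Φ` have orthonormal columns which are eigenvectors of `P` (so `PΦ = Φ diag(λ)`), and let
`v ≠ 0` be an eigenvector of `P` with eigenvalue `λ₀` orthogonal to the columns of `Φ`.
Then for the direction `Δ = v eᵢᵀ`, the directional derivative of the two-timescale latent
self-prediction flow field `G` at `Φ` in direction `Δ` equals `(λ₀ λᵢ − λᵢ²) • Δ`; in particular
if `0 < λᵢ < λ₀` this eigenvalue of the linearization is strictly positive, so `Φ` is linearly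
unstable. -/
theorem stmt1 {n k : ℕ} (P : Matrix (Fin n) (Fin n) ℝ)
    (Φ : Matrix (Fin n) (Fin k) ℝ) (lam : Fin k → ℝ)
    (horth : Φᵀ * Φ = 1) (heig : P * Φ = Φ * Matrix.diagonal lam)
    (v : Fin n → ℝ) (hv : v ≠ 0) (lam0 : ℝ)
    (hPv : P *ᵥ v = lam0 • v) (hoΦ : Φᵀ *ᵥ v = 0)
    (G : Matrix (Fin n) (Fin k) ℝ → Matrix (Fin n) (Fin k) ℝ)
    (hG : G = fun Φ' => (1 - Φ' * (Φ'ᵀ * Φ')⁻¹ * Φ'ᵀ) * P * Φ' * ((Φ'ᵀ * Φ')⁻¹ * Φ'ᵀ * P * Φ')ᵀ)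
    (i : Fin k) (Δ : Matrix (Fin n) (Fin k) ℝ)
    (hΔ : Δ = Matrix.vecMulVec v (Pi.single i 1)) :
    HasDerivAt (fun ε : ℝ => G (Φ + ε • Δ)) ((lam0 * lam i - (lam i) ^ 2) • Δ) 0 ∧
    (0 < lam i → lam i < lam0 → 0 < lam0 * lam i - (lam i) ^ 2) := by
  constructor
  · set u : Fin k → ℝ := Pi.single i 1 with hu
    set E : Matrix (Fin k) (Fin k) ℝ := Matrix.diagonal u with hE
    set D : Matrix (Fin k) (Fin k) ℝ := Matrix.diagonal lam with hD
    set c : ℝ := v ⬝ᵥ v with hc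
    have hc0 : 0 ≤ c := by
      simp only [hc, dotProduct]
      exact Finset.sum_nonneg fun m _ => mul_self_nonneg _
    -- basic products
    have hoΦ' : ∀ j, (∑ m, Φ m j * v m) = 0 := by
      intro j
      have := congrFun hoΦ j
      simpa [Matrix.mulVec, dotProduct, mul_comm] using this
    have hΦΔ : Φᵀ * Δ = 0 := by
      ext j l
      simp only [Matrix.mul_apply, hΔ, Matrix.vecMulVec_apply, Matrix.transpose_apply,
        Matrix.zero_apply]
      simp_rw [← mul_assoc, ← Finset.sum_mul, hoΦ' j, zero_mul]
    have hΔΦ : Δᵀ * Φ = 0 := by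
      have := congrArg Matrix.transpose hΦΔ
      simpa [Matrix.transpose_mul] using this
    have hPv' : ∀ j, (∑ m, P j m * v m) = lam0 * v j := by
      intro j
      have := congrFun hPv j
      simpa [Matrix.mulVec, dotProduct] using this
    have hPΔ : P * Δ = lam0 • Δ := by
      ext j l
      simp only [Matrix.mul_apply, hΔ, Matrix.vecMulVec_apply, Matrix.smul_apply, smul_eq_mul]
      simp_rw [← mul_assoc, ← Finset.sum_mul, hPv' j]
    have hΔΔ : Δᵀ * Δ = c • E := by
      ext j l
      simp only [Matrix.mul_apply, hΔ, Matrix.vecMulVec_apply, Matrix.transpose_apply,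
        Matrix.smul_apply, hE, Matrix.diagonal_apply, smul_eq_mul, hc, dotProduct]
      rcases eq_or_ne j i with rfl | hj
      · rcases eq_or_ne l j with rfl | hl
        · simp [hu, Finset.sum_mul, Finset.mul_sum]
        · simp [hu, Pi.single_apply, (Ne.symm hl)]
      · simp [hu, Pi.single_apply, hj]
    have hΔD : Δ * D = lam i • Δ := by
      ext j l
      simp only [hD, Matrix.mul_diagonal, hΔ, Matrix.vecMulVec_apply, Matrix.smul_apply,
        smul_eq_mul, hu, Pi.single_apply]
      rcases eq_or_ne l i with rfl | hl
      · simp; ring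
      · simp [hl]
    have hΔE : Δ * E = Δ := by
      ext j l
      simp only [hE, Matrix.mul_diagonal, hΔ, Matrix.vecMulVec_apply, hu, Pi.single_apply]
      rcases eq_or_ne l i with rfl | hl
      · simp
      · simp [hl]
    have hED : E * D = lam i • E := by
      have h : (fun j => u j * lam j) = lam i • u := by
        funext j
        rcases eq_or_ne j i with rfl | hj
        · simp [hu]
        · simp [hu, Pi.single_apply, hj]
      rw [hE, hD, Matrix.diagonal_mul_diagonal, h, Matrix.diagonal_smul]
    have hEE : E * E = E := by
      have h : (fun j => u j * u j) = u := by
        funext j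
        rcases eq_or_ne j i with rfl | hj
        · simp [hu]
        · simp [hu, Pi.single_apply, hj]
      rw [hE, Matrix.diagonal_mul_diagonal, h]
    -- scalar functions
    have hA1 : ∀ X : Matrix (Fin k) (Fin k) ℝ, Φᵀ * (Φ * X) = X := fun X => by
      rw [← Matrix.mul_assoc, horth, Matrix.one_mul]
    have hA2 : ∀ X : Matrix (Fin k) (Fin k) ℝ, Φᵀ * (Δ * X) = 0 := fun X => by
      rw [← Matrix.mul_assoc, hΦΔ, Matrix.zero_mul]
    have hA3 : ∀ X : Matrix (Fin k) (Fin k) ℝ, Δᵀ * (Φ * X) = 0 := fun X => by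
      rw [← Matrix.mul_assoc, hΔΦ, Matrix.zero_mul]
    have hA4 : ∀ X : Matrix (Fin k) (Fin k) ℝ, Δᵀ * (Δ * X) = c • (E * X) := fun X => by
      rw [← Matrix.mul_assoc, hΔΔ, Matrix.smul_mul]
    have hA5 : ∀ X : Matrix (Fin k) (Fin k) ℝ, P * (Φ * X) = Φ * (D * X) := fun X => by
      rw [← Matrix.mul_assoc, heig, Matrix.mul_assoc]
    have hA6 : ∀ X : Matrix (Fin k) (Fin k) ℝ, P * (Δ * X) = lam0 • (Δ * X) := fun X => by
      rw [← Matrix.mul_assoc, hPΔ, Matrix.smul_mul]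
    have hA7 : ∀ X : Matrix (Fin k) (Fin k) ℝ, Δ * (D * X) = lam i • (Δ * X) := fun X => by
      rw [← Matrix.mul_assoc, hΔD, Matrix.smul_mul]
    have hA8 : ∀ X : Matrix (Fin k) (Fin k) ℝ, Δ * (E * X) = Δ * X := fun X => by
      rw [← Matrix.mul_assoc, hΔE]
    have hA9 : ∀ X : Matrix (Fin k) (Fin k) ℝ, E * (D * X) = lam i • (E * X) := fun X => by
      rw [← Matrix.mul_assoc, hED, Matrix.smul_mul]
    have hA10 : ∀ X : Matrix (Fin k) (Fin k) ℝ, E * (E * X) = E * X := fun X => by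
      rw [← Matrix.mul_assoc, hEE]
    -- scalar functions
    set α : ℝ → ℝ := fun ε =>
      (c*ε^2)*lam0 - ((c*ε^2)/(1+c*ε^2))*lam i - ((c*ε^2)/(1+c*ε^2))*(c*ε^2)*lam0 with hα
    have hden : ∀ ε : ℝ, (0:ℝ) < 1 + c*ε^2 := fun ε => by positivity
    -- main pointwise identity
    have key : ∀ ε : ℝ, G (Φ + ε • Δ) =
        (ε * (lam0 - lam i - α ε) * (lam i + α ε)) • Δ
        + (-(α ε * (lam i + α ε))) • (Φ * E) := by
      intro ε
      have hs1 : (1:ℝ) + c * ε^2 ≠ 0 := ne_of_gt (hden ε)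
      set s : ℝ := c * ε^2 with hs
      set t : ℝ := s / (1 + s) with ht
      set Φ' : Matrix (Fin n) (Fin k) ℝ := Φ + ε • Δ with hΦ'
      have hαval : α ε = s * lam0 - t * lam i - t * s * lam0 := by rw [hα]
      have hM : Φ'ᵀ * Φ' = 1 + s • E := by
        rw [hΦ']
        simp only [Matrix.transpose_add, Matrix.transpose_smul, Matrix.add_mul, Matrix.mul_add,
          Matrix.smul_mul, Matrix.mul_smul, horth, hΦΔ, hΔΦ, hΔΔ, smul_zero, add_zero, zero_add]
        rw [hs]
        module
      have hMinv : (Φ'ᵀ * Φ')⁻¹ = 1 - t • E := by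
        apply Matrix.inv_eq_right_inv
        rw [hM]
        have h1 : (1 + s • E) * (1 - t • E) = 1 + (s - t - s*t) • E := by
          simp only [Matrix.add_mul, Matrix.mul_sub, Matrix.mul_one, Matrix.one_mul,
            Matrix.smul_mul, Matrix.mul_smul, hEE]
          module
        have h2 : s - t - s*t = 0 := by rw [ht]; field_simp; ring
        rw [h1, h2, zero_smul, add_zero]
      have hFeq : (Φ'ᵀ * Φ')⁻¹ * Φ'ᵀ * P * Φ' = D + α ε • E := by
        rw [hMinv, hαval]
        conv_lhs => rw [hΦ']
        simp only [Matrix.transpose_add, Matrix.transpose_smul, Matrix.add_mul, Matrix.mul_add,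
          Matrix.sub_mul, Matrix.mul_sub, Matrix.smul_mul, Matrix.mul_smul, Matrix.one_mul,
          Matrix.mul_one, Matrix.mul_assoc, heig, hPΔ, horth, hΦΔ, hΔΦ, hΔΔ, hΔD, hΔE, hED,
          hEE, hA1, hA2, hA3, hA4, hA5, hA6, hA7, hA8, hA9, hA10, Matrix.zero_mul,
          Matrix.mul_zero, smul_zero, zero_smul, add_zero, zero_add]
        rw [hs]
        module
      have hFT : ((Φ'ᵀ * Φ')⁻¹ * Φ'ᵀ * P * Φ')ᵀ = D + α ε • E := by
        rw [hFeq, Matrix.transpose_add, Matrix.transpose_smul, hD, hE,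
          Matrix.diagonal_transpose, Matrix.diagonal_transpose]
      have hnum : (1 - Φ' * (Φ'ᵀ * Φ')⁻¹ * Φ'ᵀ) * P * Φ' =
          (ε * (lam0 - lam i - α ε)) • Δ + (-(α ε)) • (Φ * E) := by
        rw [hMinv, hαval]
        conv_lhs => rw [hΦ']
        simp only [Matrix.transpose_add, Matrix.transpose_smul, Matrix.add_mul, Matrix.mul_add,
          Matrix.sub_mul, Matrix.mul_sub, Matrix.smul_mul, Matrix.mul_smul, Matrix.one_mul,
          Matrix.mul_one, Matrix.mul_assoc, heig, hPΔ, horth, hΦΔ, hΔΦ, hΔΔ, hΔD, hΔE, hED,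
          hEE, hA1, hA2, hA3, hA4, hA5, hA6, hA7, hA8, hA9, hA10, Matrix.zero_mul,
          Matrix.mul_zero, smul_zero, zero_smul, add_zero, zero_add]
        rw [hs]
        module
      simp only [hG]
      rw [hFT, hnum]
      simp only [Matrix.add_mul, Matrix.mul_add, Matrix.smul_mul, Matrix.mul_smul,
        Matrix.mul_assoc, hΔD, hΔE, hED, hEE, hA7, hA8, hA9, hA10]
      module
    -- derivative of α
    have hq : HasDerivAt (fun ε : ℝ => c * ε^2) 0 0 := by
      have := (hasDerivAt_pow 2 (0:ℝ)).const_mul c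
      simpa using this
    have hr : HasDerivAt (fun ε : ℝ => (c*ε^2)/(1+c*ε^2)) 0 0 := by
      have hden0 : (fun ε : ℝ => 1 + c*ε^2) 0 ≠ 0 := by simpa using ne_of_gt (hden 0)
      have := hq.fun_div ((hasDerivAt_const (0:ℝ) (1:ℝ)).fun_add hq) hden0
      simpa using this
    have hαd : HasDerivAt α 0 0 := by
      have h1 := (hq.mul_const lam0).fun_sub (hr.mul_const (lam i))
      have h2 := ((hr.fun_mul hq).mul_const lam0)
      have := h1.fun_sub h2
      simpa [hα] using this
    have hα0 : α 0 = 0 := by simp [hα]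
    have hA : HasDerivAt (fun ε => lam0 - lam i - α ε) 0 0 :=
      by simpa using (hasDerivAt_const (0:ℝ) (lam0 - lam i)).fun_sub hαd
    have hB : HasDerivAt (fun ε => lam i + α ε) 0 0 :=
      by simpa using (hasDerivAt_const (0:ℝ) (lam i)).fun_add hαd
    have ha : HasDerivAt (fun ε => ε * (lam0 - lam i - α ε) * (lam i + α ε))
        (lam0 * lam i - (lam i)^2) 0 := by
      have h2 := (hasDerivAt_id (0:ℝ)).fun_mul hA
      have h3 := h2.fun_mul hB
      refine h3.congr_deriv ?_
      simp [hα0]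
      ring
    have hb : HasDerivAt (fun ε => -(α ε * (lam i + α ε))) 0 0 := by
      have := (hαd.fun_mul hB).fun_neg
      simpa [hα0] using this
    have hfin := (ha.smul_const Δ).add (hb.smul_const (Φ * E))
    rw [zero_smul, add_zero] at hfin
    have hfun : (fun ε : ℝ => G (Φ + ε • Δ)) =
        fun ε => (ε * (lam0 - lam i - α ε) * (lam i + α ε)) • Δ
          + (-(α ε * (lam i + α ε))) • (Φ * E) := funext key
    rw [hfun]
    exact hfin
  · intro h1 h2
    nlinarith
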